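/- For n ≥ 4, the number of Latin squares of order n that admit at least one non-identity automorphism is at most 6·(n!)³·n^{5n²/8}. -/

import Mathlib

/-- A Latin square of order `n`: every row and every column is a bijection. -/
def IsLatinSquare (n : ℕ) (L : Fin n → Fin n → Fin n) : Prop :=
  (∀ i, Function.Bijective (L i)) ∧ (∀ j, Function.Bijective (fun i => L i j))

/-- The part (row/column/entry) of an element of the disjoint union `R ⊕ C ⊕ E`. -/
def latinPart (n : ℕ) : (Fin n ⊕ Fin n ⊕ Fin n) → Fin 3 :=
  Sum.elim (fun _ => 0) (Sum.elim (fun _ => 1) (fun _ => 2))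

/-- The cells of a Latin square `L`, viewed as 3-element subsets of `R ⊕ C ⊕ E`. -/
def latinCells (n : ℕ) (L : Fin n → Fin n → Fin n) :
    Set (Set (Fin n ⊕ Fin n ⊕ Fin n)) :=
  {s | ∃ i j, s = {Sum.inl i, Sum.inr (Sum.inl j), Sum.inr (Sum.inr (L i j))}}

/-- `g` is an automorphism of the Latin square `L`: it preserves the partition
into the three parts `R, C, E` (possibly permuting the parts), and it maps the
set of cells of `L` onto itself. -/
def IsLatinAuto (n : ℕ) (L : Fin n → Fin n → Fin n)
    (g : Equiv.Perm (Fin n ⊕ Fin n ⊕ Fin n)) : Prop :=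
  (∃ σ : Equiv.Perm (Fin 3), ∀ x, latinPart n (g x) = σ (latinPart n x)) ∧
  (fun s => ⇑g '' s) '' latinCells n L = latinCells n L

open Equiv Function Finset

attribute [local instance] Classical.propDecidable
set_option linter.unusedTactic false
set_option linter.unreachableTactic false
set_option maxHeartbeats 1000000

abbrev RCE (n : ℕ) := Fin n ⊕ Fin n ⊕ Fin n

@[simp] lemma part_inl {n : ℕ} (i : Fin n) : latinPart n (Sum.inl i) = 0 := rfl
@[simp] lemma part_inrl {n : ℕ} (j : Fin n) : latinPart n (Sum.inr (Sum.inl j)) = 1 := rfl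
@[simp] lemma part_inrr {n : ℕ} (k : Fin n) : latinPart n (Sum.inr (Sum.inr k)) = 2 := rfl

def rceIdx {n : ℕ} : RCE n → Fin n := Sum.elim id (Sum.elim id id)

lemma rce_eq_of {n : ℕ} {x y : RCE n} (hp : latinPart n x = latinPart n y)
    (hi : rceIdx x = rceIdx y) : x = y := by
  rcases x with i | j | k <;> rcases y with i' | j' | k' <;>
    simp_all [latinPart, rceIdx]

def cellOf {n : ℕ} (L : Fin n → Fin n → Fin n) (i j : Fin n) : Set (RCE n) :=
  {Sum.inl i, Sum.inr (Sum.inl j), Sum.inr (Sum.inr (L i j))}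

lemma cellOf_mem {n : ℕ} (L : Fin n → Fin n → Fin n) (i j : Fin n) :
    cellOf L i j ∈ latinCells n L := ⟨i, j, rfl⟩

lemma image_cellOf {n : ℕ} (L : Fin n → Fin n → Fin n) (g : Perm (RCE n)) (i j : Fin n) :
    ⇑g '' cellOf L i j =
      {g (Sum.inl i), g (Sum.inr (Sum.inl j)), g (Sum.inr (Sum.inr (L i j)))} := by
  simp [cellOf, Set.image_insert_eq]

lemma triple_eq {n : ℕ} {a b c a' b' c' : Fin n}
    (h : ({Sum.inl a, Sum.inr (Sum.inl b), Sum.inr (Sum.inr c)} : Set (RCE n)) =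
      {Sum.inl a', Sum.inr (Sum.inl b'), Sum.inr (Sum.inr c')}) :
    a = a' ∧ b = b' ∧ c = c' := by
  refine ⟨?_, ?_, ?_⟩
  · have := h ▸ (show (Sum.inl a : RCE n) ∈ _ from Set.mem_insert _ _)
    simpa using this
  · have : (Sum.inr (Sum.inl b) : RCE n) ∈
        ({Sum.inl a', Sum.inr (Sum.inl b'), Sum.inr (Sum.inr c')} : Set (RCE n)) := by
      rw [← h]; simp
    simpa using this
  · have : (Sum.inr (Sum.inr c) : RCE n) ∈
        ({Sum.inl a', Sum.inr (Sum.inl b'), Sum.inr (Sum.inr c')} : Set (RCE n)) := by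
      rw [← h]; simp
    simpa using this

lemma triple_comm12 {X : Type*} (x y z : X) : ({x, y, z} : Set X) = {y, x, z} := by
  ext w; simp; tauto

lemma triple_comm23 {X : Type*} (x y z : X) : ({x, y, z} : Set X) = {x, z, y} := by
  ext w; simp; tauto

lemma triple_rot {X : Type*} (x y z : X) : ({x, y, z} : Set X) = {z, x, y} := by
  ext w; simp; tauto

lemma cell_eq_extract {n : ℕ} {L : Fin n → Fin n → Fin n} {a b c : Fin n}
    (h : ({Sum.inl a, Sum.inr (Sum.inl b), Sum.inr (Sum.inr c)} : Set (RCE n)) ∈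
      latinCells n L) : L a b = c := by
  obtain ⟨i, j, hij⟩ := h
  obtain ⟨h1, h2, h3⟩ := triple_eq hij
  rw [h1, h2, ← h3]

lemma auto_cell_mem {n : ℕ} {L : Fin n → Fin n → Fin n} {g : Perm (RCE n)}
    (h : IsLatinAuto n L g) (i j : Fin n) : ⇑g '' cellOf L i j ∈ latinCells n L := by
  rw [← h.2]; exact ⟨cellOf L i j, cellOf_mem L i j, rfl⟩

-- ===== component extraction =====

def pinj (n : ℕ) : Fin 3 → Fin n → RCE n :=
  ![Sum.inl, Sum.inr ∘ Sum.inl, Sum.inr ∘ Sum.inr]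

@[simp] lemma pinj_zero {n : ℕ} (i : Fin n) : pinj n 0 i = Sum.inl i := rfl
@[simp] lemma pinj_one {n : ℕ} (i : Fin n) : pinj n 1 i = Sum.inr (Sum.inl i) := rfl
@[simp] lemma pinj_two {n : ℕ} (i : Fin n) : pinj n 2 i = Sum.inr (Sum.inr i) := rfl

lemma part_pinj {n : ℕ} (t : Fin 3) (i : Fin n) : latinPart n (pinj n t i) = t := by
  fin_cases t <;> rfl

lemma pinj_inj {n : ℕ} (t : Fin 3) : Function.Injective (pinj n t) := by
  fin_cases t <;> intro a b h <;> simpa [pinj] using h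

lemma part_eq_imp {n : ℕ} {x : RCE n} {t : Fin 3} (h : latinPart n x = t) :
    ∃ i, x = pinj n t i := by
  rcases x with i | j | k
  · exact ⟨i, by rw [← h]; rfl⟩
  · exact ⟨j, by rw [← h]; rfl⟩
  · exact ⟨k, by rw [← h]; rfl⟩

lemma extract_component {n : ℕ} {g : Perm (RCE n)} {σ : Perm (Fin 3)}
    (hσ : ∀ x, latinPart n (g x) = σ (latinPart n x)) (s t : Fin 3) (hst : σ s = t) :
    ∃ e : Fin n → Fin n, Function.Bijective e ∧ ∀ i, g (pinj n s i) = pinj n t (e i) := by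
  have h : ∀ i, ∃ i', g (pinj n s i) = pinj n t i' := by
    intro i
    exact part_eq_imp (by rw [hσ, part_pinj, hst])
  choose e he using h
  have hinj : Function.Injective e := by
    intro i i' hii
    have : g (pinj n s i) = g (pinj n s i') := by rw [he, he, hii]
    exact pinj_inj s (g.injective this)
  exact ⟨e, Finite.injective_iff_bijective.1 hinj, he⟩

-- ===== orbit representatives =====

noncomputable def repsOf {n : ℕ} (π : Perm (Fin n)) : Finset (Fin n) :=
  Finset.univ.filter (fun x => ∀ k : ℕ, x ≤ (π ^ k) x)

def fixOf {n : ℕ} (π : Perm (Fin n)) : Finset (Fin n) :=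
  Finset.univ.filter (fun x => π x = x)

lemma mem_fixOf {n : ℕ} {π : Perm (Fin n)} {x : Fin n} : x ∈ fixOf π ↔ π x = x := by
  rw [fixOf, mem_filter]; simp

lemma fix_subset_reps {n : ℕ} (π : Perm (Fin n)) : fixOf π ⊆ repsOf π := by
  intro x hx
  rw [fixOf, mem_filter] at hx
  rw [repsOf, mem_filter]
  refine ⟨mem_univ _, fun k => ?_⟩
  have : (π ^ k) x = x := by
    induction k with
    | zero => rfl
    | succ m ih => rw [pow_succ, Perm.mul_apply, hx.2, ih]
  rw [this]

lemma reps_closure {n : ℕ} (π : Perm (Fin n)) (T : Set (Fin n))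
    (hR : ∀ x ∈ repsOf π, x ∈ T) (hcl : ∀ x ∈ T, π x ∈ T) : ∀ x, x ∈ T := by
  have hpow : ∀ (k : ℕ) (y : Fin n), y ∈ T → (π ^ k) y ∈ T := by
    intro k
    induction k with
    | zero => intro y hy; simpa using hy
    | succ m ih =>
      intro y hy
      rw [pow_succ', Perm.mul_apply]
      exact hcl _ (ih y hy)
  intro x
  set d := orderOf π with hd
  have hdpos : 0 < d := orderOf_pos π
  set O : Finset (Fin n) := (Finset.range d).image (fun k => (π ^ k) x) with hO
  have hne : O.Nonempty := ⟨x, by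
    rw [hO, mem_image]; exact ⟨0, Finset.mem_range.2 hdpos, rfl⟩⟩
  obtain ⟨j, hj, hjm⟩ : ∃ j ∈ Finset.range d, (π ^ j) x = O.min' hne :=
    Finset.mem_image.1 (Finset.min'_mem O hne)
  set m := O.min' hne with hm
  have hmem : ∀ k : ℕ, (π ^ k) x ∈ O := by
    intro k
    rw [hO, mem_image]
    refine ⟨k % d, Finset.mem_range.2 (Nat.mod_lt _ hdpos), ?_⟩
    rw [hd]
    conv_rhs => rw [← pow_mod_orderOf]
  have hrep : m ∈ repsOf π := by
    rw [repsOf, mem_filter]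
    refine ⟨mem_univ _, fun k => ?_⟩
    have : (π ^ k) m = (π ^ (k + j)) x := by rw [← hjm, ← Perm.mul_apply, ← pow_add]
    rw [this]
    exact Finset.min'_le O _ (hmem _)
  have hxm : (π ^ (d - j)) m = x := by
    rw [← hjm, ← Perm.mul_apply, ← pow_add]
    have : d - j + j = d := Nat.sub_add_cancel (le_of_lt (Finset.mem_range.1 hj))
    rw [this, hd, pow_orderOf_eq_one]
    rfl
  rw [← hxm]
  exact hpow _ _ (hR m hrep)

lemma reps_card {n : ℕ} (π : Perm (Fin n)) :
    2 * (repsOf π).card ≤ n + (fixOf π).card := by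
  have key : (repsOf π \ fixOf π).card ≤ (Finset.univ \ repsOf π).card := by
    apply Finset.card_le_card_of_injOn π
    · intro x hx
      rw [Finset.mem_coe, mem_sdiff] at hx
      obtain ⟨hxr, hxf⟩ := hx
      rw [Finset.mem_coe, mem_sdiff]
      refine ⟨mem_univ _, fun hc => ?_⟩
      rw [repsOf, mem_filter] at hxr hc
      have h1 : x ≤ π x := by simpa using hxr.2 1
      have h2 : π x ≤ x := by
        have := hc.2 (orderOf π - 1)
        have he : (π ^ (orderOf π - 1)) (π x) = x := by
          rw [← Perm.mul_apply, ← pow_succ]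
          have : orderOf π - 1 + 1 = orderOf π := Nat.sub_add_cancel (orderOf_pos π)
          rw [this, pow_orderOf_eq_one]; rfl
        rwa [he] at this
      have : π x = x := le_antisymm h2 h1
      rw [fixOf, mem_filter] at hxf
      exact hxf ⟨mem_univ _, this⟩
    · intro a _ b _ h
      exact π.injective h
  rw [Finset.card_sdiff_of_subset (fix_subset_reps π), Finset.card_sdiff_of_subset (Finset.subset_univ _),
    Finset.card_univ, Fintype.card_fin] at key
  have h1 : (fixOf π).card ≤ (repsOf π).card := Finset.card_le_card (fix_subset_reps π)
  have h2 : (repsOf π).card ≤ n := by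
    simpa using Finset.card_le_card (Finset.subset_univ (repsOf π))
  omega

-- ===== counting via determination =====

lemma card_filter_le_pow (n : ℕ) (P : (Fin n → Fin n → Fin n) → Prop)
    [DecidablePred P] (S : Finset (Fin n × Fin n))
    (hdet : ∀ L L', P L → P L' → (∀ p ∈ S, L p.1 p.2 = L' p.1 p.2) → L = L') :
    (Finset.univ.filter P).card ≤ n ^ S.card := by
  have : (Finset.univ.filter P).card ≤
      (Finset.univ : Finset ({x // x ∈ S} → Fin n)).card := by
    apply Finset.card_le_card_of_injOn (fun L p => L p.1.1 p.1.2)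
    · intro L _; exact Finset.mem_univ _
    · intro L hL L' hL' h
      rw [Finset.mem_coe, Finset.mem_filter] at hL hL'
      apply hdet L L' hL.2 hL'.2
      intro p hp
      exact congrFun h ⟨p, hp⟩
  rwa [Finset.card_univ, Fintype.card_fun, Fintype.card_fin, Fintype.card_coe] at this

-- ===== the fixed-point bound for autotopisms =====

lemma fix_mul {n : ℕ} {L : Fin n → Fin n → Fin n} {α β γ : Perm (Fin n)}
    (hL : IsLatinSquare n L) (hrel : ∀ i j, L (α i) (β j) = γ (L i j))
    (hnt : ¬(α = 1 ∧ β = 1 ∧ γ = 1)) :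
    4 * ((fixOf α).card * (fixOf β).card) ≤ n ^ 2 := by
  set FA := fixOf α with hFA
  set FB := fixOf β with hFB
  set FC := fixOf γ with hFC
  rcases FA.eq_empty_or_nonempty with ha | ⟨i₀, hi₀⟩
  · rw [ha]; simp
  rcases FB.eq_empty_or_nonempty with hb | ⟨j₀, hj₀⟩
  · rw [hb]; simp
  have C1 : ∀ {i j}, i ∈ FA → j ∈ FB → L i j ∈ FC := by
    intro i j hi hj
    rw [hFC, mem_fixOf]
    have := hrel i j
    rw [mem_fixOf.1 hi, mem_fixOf.1 hj] at this
    exact this.symm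
  have C2 : ∀ {i j}, i ∈ FA → L i j ∈ FC → j ∈ FB := by
    intro i j hi hk
    rw [hFB, mem_fixOf]
    have := hrel i j
    rw [mem_fixOf.1 hi, mem_fixOf.1 hk] at this
    exact (hL.1 i).1 this
  have C3 : ∀ {i j}, j ∈ FB → L i j ∈ FC → i ∈ FA := by
    intro i j hj hk
    rw [hFA, mem_fixOf]
    have := hrel i j
    rw [mem_fixOf.1 hj, mem_fixOf.1 hk] at this
    exact (hL.2 j).1 this
  have hbc : FB.card = FC.card := by
    apply le_antisymm
    · apply Finset.card_le_card_of_injOn (L i₀)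
      · intro j hj; exact C1 hi₀ hj
      · intro x _ y _ h; exact (hL.1 i₀).1 h
    · apply Finset.card_le_card_of_injOn
        (fun k => (Equiv.ofBijective (L i₀) (hL.1 i₀)).symm k)
      · intro k hk
        apply C2 hi₀ (j := (Equiv.ofBijective (L i₀) (hL.1 i₀)).symm k)
        have : L i₀ ((Equiv.ofBijective (L i₀) (hL.1 i₀)).symm k) = k :=
          (Equiv.ofBijective (L i₀) (hL.1 i₀)).apply_symm_apply k
        rwa [this]
      · intro x _ y _ h
        exact (Equiv.ofBijective (L i₀) (hL.1 i₀)).symm.injective h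
  have hac : FA.card = FC.card := by
    apply le_antisymm
    · apply Finset.card_le_card_of_injOn (fun i => L i j₀)
      · intro i hi; exact C1 hi hj₀
      · intro x _ y _ h; exact (hL.2 j₀).1 h
    · apply Finset.card_le_card_of_injOn
        (fun k => (Equiv.ofBijective (fun i => L i j₀) (hL.2 j₀)).symm k)
      · intro k hk
        apply C3 hj₀ (i := (Equiv.ofBijective (fun i => L i j₀) (hL.2 j₀)).symm k)
        have : L ((Equiv.ofBijective (fun i => L i j₀) (hL.2 j₀)).symm k) j₀ = k :=
          (Equiv.ofBijective (fun i => L i j₀) (hL.2 j₀)).apply_symm_apply k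
        rwa [this]
      · intro x _ y _ h
        exact (Equiv.ofBijective (fun i => L i j₀) (hL.2 j₀)).symm.injective h
  have han : FA.card < n := by
    rcases lt_or_ge FA.card n with h | h
    · exact h
    exfalso
    have haun : FA = Finset.univ := Finset.eq_univ_of_card _ (le_antisymm
      (by simpa using Finset.card_le_card (Finset.subset_univ FA)) (by simpa using h))
    have hαid : α = 1 := by
      apply Equiv.ext; intro i
      have hmm : i ∈ FA := by rw [haun]; exact Finset.mem_univ _
      rw [hFA] at hmm
      exact mem_fixOf.1 hmm
    have hbun : FB = Finset.univ := Finset.eq_univ_of_card _ (le_antisymm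
      (by simpa using Finset.card_le_card (Finset.subset_univ FB))
      (by rw [hbc, ← hac, haun]; simp))
    have hβid : β = 1 := by
      apply Equiv.ext; intro j
      have hmm : j ∈ FB := by rw [hbun]; exact Finset.mem_univ _
      rw [hFB] at hmm
      exact mem_fixOf.1 hmm
    have hcun : FC = Finset.univ := Finset.eq_univ_of_card _ (le_antisymm
      (by simpa using Finset.card_le_card (Finset.subset_univ FC))
      (by rw [← hac, haun]; simp))
    have hγid : γ = 1 := by
      apply Equiv.ext; intro k
      have hmm : k ∈ FC := by rw [hcun]; exact Finset.mem_univ _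
      rw [hFC] at hmm
      exact mem_fixOf.1 hmm
    exact hnt ⟨hαid, hβid, hγid⟩
  obtain ⟨i₁, hi₁⟩ : ∃ i₁, i₁ ∉ FA := by
    by_contra hcon
    push_neg at hcon
    have : FA = Finset.univ := Finset.eq_univ_iff_forall.2 hcon
    rw [this] at han
    simp at han
  have hkey : FB.card + FC.card ≤ n := by
    have h1 : FB.card ≤ (Finset.univ \ FC).card := by
      apply Finset.card_le_card_of_injOn (L i₁)
      · intro j hj
        rw [Finset.mem_coe, Finset.mem_sdiff]
        refine ⟨Finset.mem_univ _, fun hk => hi₁ (C3 hj hk)⟩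
      · intro x _ y _ h; exact (hL.1 i₁).1 h
    rw [Finset.card_sdiff_of_subset (Finset.subset_univ _), Finset.card_univ, Fintype.card_fin] at h1
    have h2 : FC.card ≤ n := by simpa using Finset.card_le_card (Finset.subset_univ FC)
    omega
  nlinarith [hbc, hac, Finset.card_le_card (Finset.subset_univ FA)]
-- ===== the set of Latin squares with automorphism g =====

noncomputable def autoSet (n : ℕ) (g : Perm (RCE n)) : Finset (Fin n → Fin n → Fin n) :=
  Finset.univ.filter (fun L => IsLatinSquare n L ∧ IsLatinAuto n L g)

-- ===== case σ = 1 : autotopisms =====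

lemma bound_autotop (n : ℕ) (g : Perm (RCE n)) (hg1 : g ≠ 1)
    (hσ : ∀ x, latinPart n (g x) = latinPart n x) :
    ∃ m : ℕ, (autoSet n g).card ≤ n ^ m ∧ 8 * m ≤ 5 * n ^ 2 := by
  have hσ' : ∀ x, latinPart n (g x) = (1 : Perm (Fin 3)) (latinPart n x) := by
    simpa using hσ
  obtain ⟨α, hαb, hα⟩ := extract_component hσ' 0 0 rfl
  obtain ⟨β, hβb, hβ⟩ := extract_component hσ' 1 1 rfl
  obtain ⟨γ, hγb, hγ⟩ := extract_component hσ' 2 2 rfl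
  simp only [pinj_zero, pinj_one, pinj_two] at hα hβ hγ
  rcases (autoSet n g).eq_empty_or_nonempty with hA | ⟨L₀, hL₀⟩
  · exact ⟨0, by rw [hA]; simp, by positivity⟩
  rw [autoSet, mem_filter] at hL₀
  set αp := Equiv.ofBijective α hαb with hαp
  set βp := Equiv.ofBijective β hβb with hβp
  set γp := Equiv.ofBijective γ hγb with hγp
  have hαpa : ∀ i, αp i = α i := fun _ => rfl
  have hβpa : ∀ j, βp j = β j := fun _ => rfl
  have hγpa : ∀ k, γp k = γ k := fun _ => rfl
  have hrel : ∀ (L : Fin n → Fin n → Fin n), IsLatinAuto n L g →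
      ∀ i j, L (αp i) (βp j) = γp (L i j) := by
    intro L hA i j
    have hmem := auto_cell_mem hA i j
    rw [image_cellOf, hα, hβ, hγ] at hmem
    exact cell_eq_extract hmem
  have hnt : ¬(αp = 1 ∧ βp = 1 ∧ γp = 1) := by
    rintro ⟨h1, h2, h3⟩
    apply hg1
    apply Equiv.ext
    rintro (i | j | k)
    · rw [hα i]
      have : α i = i := by rw [← hαpa, h1]; rfl
      rw [this]; rfl
    · rw [hβ j]
      have : β j = j := by rw [← hβpa, h2]; rfl
      rw [this]; rfl
    · rw [hγ k]
      have : γ k = k := by rw [← hγpa, h3]; rfl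
      rw [this]; rfl
  set FA := fixOf αp with hFA
  set S := (FA ×ˢ repsOf βp) ∪ ((repsOf αp \ FA) ×ˢ Finset.univ) with hS
  have hdet : ∀ L L', (IsLatinSquare n L ∧ IsLatinAuto n L g) →
      (IsLatinSquare n L' ∧ IsLatinAuto n L' g) →
      (∀ p ∈ S, L p.1 p.2 = L' p.1 p.2) → L = L' := by
    intro L L' hPL hPL' hag
    have rL := hrel L hPL.2
    have rL' := hrel L' hPL'.2
    have main : ∀ i, i ∈ {i : Fin n | ∀ j, L i j = L' i j} := by
      apply reps_closure αp
      · intro i hi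
        by_cases hif : i ∈ FA
        · have inner : ∀ j, j ∈ {j : Fin n | L i j = L' i j} := by
            apply reps_closure βp
            · intro j hj
              exact hag (i, j) (Finset.mem_union_left _
                (Finset.mem_product.2 ⟨hif, hj⟩))
            · intro j hj
              have hfix : αp i = i := mem_fixOf.1 (hFA ▸ hif)
              show L i (βp j) = L' i (βp j)
              calc L i (βp j) = L (αp i) (βp j) := by rw [hfix]
                _ = γp (L i j) := rL i j
                _ = γp (L' i j) := by rw [hj]
                _ = L' (αp i) (βp j) := (rL' i j).symm
                _ = L' i (βp j) := by rw [hfix]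
          exact fun j => inner j
        · intro j
          exact hag (i, j) (Finset.mem_union_right _
            (Finset.mem_product.2 ⟨Finset.mem_sdiff.2 ⟨hi, hif⟩, Finset.mem_univ _⟩))
      · intro i hi
        intro j'
        have hj' : βp (βp.symm j') = j' := βp.apply_symm_apply j'
        calc L (αp i) j' = L (αp i) (βp (βp.symm j')) := by rw [hj']
          _ = γp (L i (βp.symm j')) := rL i _
          _ = γp (L' i (βp.symm j')) := by rw [hi (βp.symm j')]
          _ = L' (αp i) (βp (βp.symm j')) := (rL' i _).symm
          _ = L' (αp i) j' := by rw [hj']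
    funext i j
    exact main i j
  refine ⟨S.card, ?_, ?_⟩
  · rw [autoSet]
    exact card_filter_le_pow n _ S hdet
  -- arithmetic
  have hScard : S.card ≤ FA.card * (repsOf βp).card + (repsOf αp \ FA).card * n := by
    refine le_trans (Finset.card_union_le _ _) ?_
    rw [Finset.card_product, Finset.card_product, Finset.card_univ, Fintype.card_fin]
  have h4ab := fix_mul hL₀.2.1 (hrel L₀ hL₀.2.2) hnt
  have hrB := reps_card βp
  have hrA := reps_card αp
  have hsplit : (repsOf αp \ FA).card + FA.card = (repsOf αp).card := by
    rw [hFA]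
    exact Finset.card_sdiff_add_card_eq_card (fix_subset_reps αp)
  have hFAn : FA.card ≤ n := by
    simpa using Finset.card_le_card (Finset.subset_univ FA)
  -- fixOf αp = FA
  have hfixA : (fixOf αp).card = FA.card := by rw [hFA]
  set a := FA.card
  set b := (fixOf βp).card
  set rB := (repsOf βp).card
  set mA := (repsOf αp \ FA).card
  have e1 : 8 * (a * rB) ≤ 4 * a * n + 4 * (a * b) := by nlinarith
  have e2 : 8 * (mA * n) + 4 * a * n ≤ 4 * n ^ 2 := by nlinarith
  have : 8 * S.card ≤ 8 * (a * rB) + 8 * (mA * n) := by omega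
  rw [hfixA] at h4ab
  nlinarith
-- ===== case σ = (0 1), g² = 1 =====

lemma bound_swap01 (n : ℕ) (hn : 4 ≤ n) (g : Perm (RCE n)) (hg2 : g * g = 1)
    (hσ : ∀ x, latinPart n (g x) = Equiv.swap 0 1 (latinPart n x)) :
    ∃ m : ℕ, (autoSet n g).card ≤ n ^ m ∧ 8 * m ≤ 5 * n ^ 2 := by
  obtain ⟨b, hbb, hb⟩ := extract_component hσ 0 1 (Equiv.swap_apply_left 0 1)
  obtain ⟨a, hab, ha⟩ := extract_component hσ 1 0 (Equiv.swap_apply_right 0 1)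
  obtain ⟨c, hcb, hc⟩ := extract_component hσ 2 2
    (Equiv.swap_apply_of_ne_of_ne (by decide) (by decide))
  simp only [pinj_zero, pinj_one, pinj_two] at ha hb hc
  -- involution identities
  have hgg : ∀ x, g (g x) = x := by
    intro x
    have := Equiv.ext_iff.1 hg2 x
    simpa using this
  have hab' : ∀ i, a (b i) = i := by
    intro i
    have := hgg (Sum.inl i)
    rw [hb, ha] at this
    exact Sum.inl.inj this
  have hba' : ∀ j, b (a j) = j := by
    intro j
    have := hgg (Sum.inr (Sum.inl j))
    rw [ha, hb] at this
    exact Sum.inl.inj (Sum.inr.inj this)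
  have hcc : ∀ k, c (c k) = k := by
    intro k
    have := hgg (Sum.inr (Sum.inr k))
    rw [hc, hc] at this
    exact Sum.inr.inj (Sum.inr.inj this)
  have hrel : ∀ (L : Fin n → Fin n → Fin n), IsLatinAuto n L g →
      ∀ i j, L (a j) (b i) = c (L i j) := by
    intro L hA i j
    have hmem := auto_cell_mem hA i j
    rw [image_cellOf, ha, hb, hc, triple_comm12] at hmem
    exact cell_eq_extract hmem
  -- the pairing on positions
  set τ : Fin n × Fin n → Fin n × Fin n := fun p => (a p.2, b p.1) with hτ
  have hττ : ∀ p, τ (τ p) = p := by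
    intro p
    simp only [hτ, hab', hba']
  have hnpos : 0 < n := by omega
  set φ : Fin n × Fin n → ℕ := fun p => p.1.val + n * p.2.val with hφ
  have hφm : ∀ p, φ p % n = p.1.val := by
    intro p
    simp only [hφ]
    rw [Nat.add_mul_mod_self_left, Nat.mod_eq_of_lt p.1.isLt]
  have hφd : ∀ p, φ p / n = p.2.val := by
    intro p
    simp only [hφ]
    rw [Nat.add_mul_div_left _ _ hnpos, Nat.div_eq_of_lt p.1.isLt, Nat.zero_add]
  have hφinj : ∀ p q, φ p = φ q → p = q := by
    intro p q h
    refine Prod.ext (Fin.ext ?_) (Fin.ext ?_)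
    · rw [← hφm p, ← hφm q, h]
    · rw [← hφd p, ← hφd q, h]
  set S : Finset (Fin n × Fin n) := Finset.univ.filter (fun p => φ p ≤ φ (τ p)) with hS
  have hdet : ∀ L L', (IsLatinSquare n L ∧ IsLatinAuto n L g) →
      (IsLatinSquare n L' ∧ IsLatinAuto n L' g) →
      (∀ p ∈ S, L p.1 p.2 = L' p.1 p.2) → L = L' := by
    intro L L' hPL hPL' hag
    have rL := hrel L hPL.2
    have rL' := hrel L' hPL'.2
    funext i j
    by_cases hp : φ (i, j) ≤ φ (τ (i, j))
    · exact hag (i, j) (Finset.mem_filter.2 ⟨Finset.mem_univ _, hp⟩)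
    · have hτS : τ (i, j) ∈ S := by
        rw [hS, Finset.mem_filter]
        refine ⟨Finset.mem_univ _, ?_⟩
        rw [hττ]
        exact le_of_not_ge hp
      have heq : L (a j) (b i) = L' (a j) (b i) := hag _ hτS
      calc L i j = c (c (L i j)) := (hcc _).symm
        _ = c (L (a j) (b i)) := by rw [rL]
        _ = c (L' (a j) (b i)) := by rw [heq]
        _ = c (c (L' i j)) := by rw [rL']
        _ = L' i j := hcc _
  refine ⟨S.card, ?_, ?_⟩
  · rw [autoSet]
    exact card_filter_le_pow n _ S hdet
  -- cardinality of S
  have hFix : (Finset.univ.filter (fun p : Fin n × Fin n => τ p = p)).card ≤ n := by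
    have hsub : (Finset.univ.filter (fun p : Fin n × Fin n => τ p = p)) ⊆
        Finset.univ.image (fun i : Fin n => (i, b i)) := by
      intro p hp
      rw [Finset.mem_filter] at hp
      have h2 : b p.1 = p.2 := congrArg Prod.snd hp.2
      rw [Finset.mem_image]
      exact ⟨p.1, Finset.mem_univ _, by rw [h2]⟩
    refine le_trans (Finset.card_le_card hsub) ?_
    refine le_trans (Finset.card_image_le) ?_
    simp
  have hkey : (S \ (Finset.univ.filter (fun p : Fin n × Fin n => τ p = p))).card ≤
      (Finset.univ \ S).card := by
    apply Finset.card_le_card_of_injOn τ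
    · intro p hp
      rw [Finset.mem_coe, Finset.mem_sdiff] at hp ⊢
      obtain ⟨hpS, hpF⟩ := hp
      rw [hS, Finset.mem_filter] at hpS
      refine ⟨Finset.mem_univ _, fun hc => ?_⟩
      rw [hS, Finset.mem_filter, hττ] at hc
      have hne : τ p ≠ p := by
        intro h
        exact hpF (Finset.mem_filter.2 ⟨Finset.mem_univ _, h⟩)
      have : φ p = φ (τ p) := le_antisymm hpS.2 hc.2
      exact hne (hφinj _ _ this.symm)
    · intro p _ q _ h
      have := congrArg τ h
      rwa [hττ, hττ] at this
  have hcard : 2 * S.card ≤ n ^ 2 + n := by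
    have h1 : S.card ≤
        (S \ (Finset.univ.filter (fun p : Fin n × Fin n => τ p = p))).card +
        (Finset.univ.filter (fun p : Fin n × Fin n => τ p = p)).card :=
      Finset.card_le_card_sdiff_add_card
    have h2 : (Finset.univ \ S).card = n * n - S.card := by
      rw [Finset.card_sdiff_of_subset (Finset.subset_univ _), Finset.card_univ,
        Fintype.card_prod, Fintype.card_fin]
    have h3 : S.card ≤ n * n := by
      have := Finset.card_le_card (Finset.subset_univ S)
      rwa [Finset.card_univ, Fintype.card_prod, Fintype.card_fin] at this
    have := hkey
    rw [h2] at this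
    have hn2 : n ^ 2 = n * n := sq n
    omega
  have hsq : n ^ 2 = n * n := sq n
  have h4n : 4 * n ≤ n * n := Nat.mul_le_mul_right n hn
  omega
-- ===== case σ = (0 1 2), g³ = 1 =====

def c012 : Perm (Fin 3) := Equiv.swap 0 2 * Equiv.swap 0 1

lemma bound_c012 (n : ℕ) (hn : 4 ≤ n) (g : Perm (RCE n)) (hg3 : g * (g * g) = 1)
    (hσ : ∀ x, latinPart n (g x) = c012 (latinPart n x)) :
    ∃ m : ℕ, (autoSet n g).card ≤ n ^ m ∧ 8 * m ≤ 5 * n ^ 2 := by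
  obtain ⟨a, hab, ha⟩ := extract_component hσ 0 1 (by decide)
  obtain ⟨b, hbb, hb⟩ := extract_component hσ 1 2 (by decide)
  obtain ⟨c, hcb, hc⟩ := extract_component hσ 2 0 (by decide)
  simp only [pinj_zero, pinj_one, pinj_two] at ha hb hc
  have hggg : ∀ x, g (g (g x)) = x := by
    intro x
    have := Equiv.ext_iff.1 hg3 x
    simpa using this
  have hcba : ∀ i, c (b (a i)) = i := by
    intro i
    have := hggg (Sum.inl i)
    rw [ha, hb, hc] at this
    exact Sum.inl.inj this
  have hrel : ∀ (L : Fin n → Fin n → Fin n), IsLatinAuto n L g →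
      ∀ i j, L (c (L i j)) (a i) = b j := by
    intro L hA i j
    have hmem := auto_cell_mem hA i j
    rw [image_cellOf, ha, hb, hc, triple_rot] at hmem
    exact cell_eq_extract hmem
  set aE := Equiv.ofBijective a hab with haE
  set cE := Equiv.ofBijective c hcb with hcE
  set S : Finset (Fin n × Fin n) := Finset.univ.filter (fun p => p.1 ≤ aE.symm p.2)
    with hS
  have hdet : ∀ L L', (IsLatinSquare n L ∧ IsLatinAuto n L g) →
      (IsLatinSquare n L' ∧ IsLatinAuto n L' g) →
      (∀ p ∈ S, L p.1 p.2 = L' p.1 p.2) → L = L' := by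
    intro L L' hPL hPL' hag
    have rL := hrel L hPL.2
    have rL' := hrel L' hPL'.2
    have main : ∀ m : ℕ, ∀ r : Fin n, r.val < m → ∀ j, L r j = L' r j := by
      intro m
      induction m with
      | zero => intro r hr; exact absurd hr (Nat.not_lt_zero _)
      | succ m ih =>
        intro r hr j
        by_cases hrm : r.val < m
        · exact ih r hrm j
        have hrv : r.val = m := by omega
        by_cases hSc : r ≤ aE.symm j
        · exact hag (r, j) (Finset.mem_filter.2 ⟨Finset.mem_univ _, hSc⟩)
        · have hij : a (aE.symm j) = j := aE.apply_symm_apply j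
          have hilt : (aE.symm j).val < r.val := by
            have h1 : aE.symm j < r := not_le.mp hSc
            exact h1
          set i := aE.symm j with hi
          have hrow : ∀ j', L i j' = L' i j' := fun j' => ih i (by omega) j'
          set rE := Equiv.ofBijective (L i) (hPL.1.1 i) with hrE
          set rE' := Equiv.ofBijective (L' i) (hPL'.1.1 i) with hrE'
          have hsymm_eq : ∀ x, rE.symm x = rE'.symm x := by
            intro x
            apply rE'.injective
            rw [rE'.apply_symm_apply]
            show L' i (rE.symm x) = x
            rw [← hrow]
            exact rE.apply_symm_apply x
          have e1 : L r j = b (rE.symm (cE.symm r)) := by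
            have h := rL i (rE.symm (cE.symm r))
            have h2 : L i (rE.symm (cE.symm r)) = cE.symm r := rE.apply_symm_apply _
            rw [h2] at h
            have h3 : c (cE.symm r) = r := cE.apply_symm_apply r
            rw [h3, hij] at h
            exact h
          have e2 : L' r j = b (rE'.symm (cE.symm r)) := by
            have h := rL' i (rE'.symm (cE.symm r))
            have h2 : L' i (rE'.symm (cE.symm r)) = cE.symm r := rE'.apply_symm_apply _
            rw [h2] at h
            have h3 : c (cE.symm r) = r := cE.apply_symm_apply r
            rw [h3, hij] at h
            exact h
          rw [e1, e2, hsymm_eq]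
    funext r j
    exact main n r r.isLt j
  refine ⟨S.card, ?_, ?_⟩
  · rw [autoSet]
    exact card_filter_le_pow n _ S hdet
  -- cardinality of S
  have hfiber : S.card = ∑ j ∈ Finset.univ, (S.filter (fun p => p.2 = j)).card :=
    Finset.card_eq_sum_card_fiberwise (fun p _ => Finset.mem_univ p.2)
  have hper : ∀ j : Fin n, (S.filter (fun p => p.2 = j)).card ≤ (aE.symm j).val + 1 := by
    intro j
    have : (S.filter (fun p => p.2 = j)).card ≤
        (Finset.range ((aE.symm j).val + 1)).card := by
      apply Finset.card_le_card_of_injOn (fun p => p.1.val)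
      · intro p hp
        rw [Finset.mem_coe, Finset.mem_filter] at hp
        obtain ⟨hpS, hpj⟩ := hp
        rw [hS, Finset.mem_filter] at hpS
        rw [Finset.mem_coe, Finset.mem_range]
        have := hpS.2
        rw [hpj] at this
        exact Nat.lt_succ_of_le this
      · intro p hp q hq h
        rw [Finset.mem_coe, Finset.mem_filter] at hp hq
        exact Prod.ext (Fin.ext h) (by rw [hp.2, hq.2])
    simpa using this
  have hsum : ∑ j : Fin n, ((aE.symm j).val + 1) = ∑ s : Fin n, (s.val + 1) :=
    Equiv.sum_comp aE.symm (fun s => s.val + 1)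
  have hgauss : 2 * (∑ s : Fin n, (s.val + 1)) ≤ n ^ 2 + n := by
    rw [Fin.sum_univ_eq_sum_range (fun k => k + 1) n, Finset.sum_add_distrib,
      Finset.sum_const, Finset.card_range, smul_eq_mul, mul_one]
    have hs2 := Finset.sum_range_id_mul_two n
    have hsq : n ^ 2 = n * n := sq n
    have hmm : n * (n - 1) + n = n * n := by
      have : n - 1 + 1 = n := by omega
      calc n * (n - 1) + n = n * (n - 1 + 1) := by rw [Nat.mul_add, Nat.mul_one]
        _ = n * n := by rw [this]
    omega
  have hScard : 2 * S.card ≤ n ^ 2 + n := by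
    have : S.card ≤ ∑ s : Fin n, (s.val + 1) := by
      rw [hfiber, ← hsum]
      exact Finset.sum_le_sum (fun j _ => hper j)
    omega
  have h4n : 4 * n ≤ n * n := Nat.mul_le_mul_right n hn
  have hsq : n ^ 2 = n * n := sq n
  omega
-- ===== closure under multiplication =====

lemma F_mul {X : Type*} (a b : Perm X) (C : Set (Set X)) :
    (fun t => ⇑(a * b) '' t) '' C = (fun t => ⇑a '' t) '' ((fun t => ⇑b '' t) '' C) := by
  rw [Set.image_image]
  apply Set.image_congr'
  intro t
  rw [← Set.image_comp]
  rfl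

lemma auto_mul {n : ℕ} {L : Fin n → Fin n → Fin n} {g h : Perm (RCE n)}
    (hg : IsLatinAuto n L g) (hh : IsLatinAuto n L h) : IsLatinAuto n L (g * h) := by
  constructor
  · obtain ⟨σg, hσg⟩ := hg.1
    obtain ⟨σh, hσh⟩ := hh.1
    refine ⟨σg * σh, fun x => ?_⟩
    rw [Perm.mul_apply, hσg, hσh]
    rfl
  · rw [F_mul, hh.2, hg.2]

lemma autoSet_subset_sq (n : ℕ) (g : Perm (RCE n)) :
    autoSet n g ⊆ autoSet n (g * g) := by
  intro L hL
  rw [autoSet, Finset.mem_filter] at hL ⊢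
  exact ⟨hL.1, hL.2.1, auto_mul hL.2.2 hL.2.2⟩

lemma autoSet_subset_cube (n : ℕ) (g : Perm (RCE n)) :
    autoSet n g ⊆ autoSet n (g * (g * g)) := by
  intro L hL
  rw [autoSet, Finset.mem_filter] at hL ⊢
  exact ⟨hL.1, hL.2.1, auto_mul hL.2.2 (auto_mul hL.2.2 hL.2.2)⟩

-- ===== conjugations =====

def sCE (n : ℕ) : Perm (RCE n) := Equiv.sumCongr (Equiv.refl (Fin n)) (Equiv.sumComm (Fin n) (Fin n))

@[simp] lemma sCE_inl {n : ℕ} (i : Fin n) : sCE n (Sum.inl i) = Sum.inl i := rfl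
@[simp] lemma sCE_inrl {n : ℕ} (j : Fin n) :
    sCE n (Sum.inr (Sum.inl j)) = Sum.inr (Sum.inr j) := rfl
@[simp] lemma sCE_inrr {n : ℕ} (k : Fin n) :
    sCE n (Sum.inr (Sum.inr k)) = Sum.inr (Sum.inl k) := rfl

def sRC (n : ℕ) : Perm (RCE n) where
  toFun := Sum.elim (fun i => Sum.inr (Sum.inl i)) (Sum.elim Sum.inl (fun k => Sum.inr (Sum.inr k)))
  invFun := Sum.elim (fun i => Sum.inr (Sum.inl i)) (Sum.elim Sum.inl (fun k => Sum.inr (Sum.inr k)))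
  left_inv := by rintro (i | j | k) <;> rfl
  right_inv := by rintro (i | j | k) <;> rfl

@[simp] lemma sRC_inl {n : ℕ} (i : Fin n) : sRC n (Sum.inl i) = Sum.inr (Sum.inl i) := rfl
@[simp] lemma sRC_inrl {n : ℕ} (j : Fin n) : sRC n (Sum.inr (Sum.inl j)) = Sum.inl j := rfl
@[simp] lemma sRC_inrr {n : ℕ} (k : Fin n) :
    sRC n (Sum.inr (Sum.inr k)) = Sum.inr (Sum.inr k) := rfl

lemma part_sCE {n : ℕ} : ∀ x : RCE n, latinPart n (sCE n x) = Equiv.swap 1 2 (latinPart n x) := by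
  rintro (i | j | k) <;> simp <;> decide

lemma part_sRC {n : ℕ} : ∀ x : RCE n, latinPart n (sRC n x) = Equiv.swap 0 1 (latinPart n x) := by
  rintro (i | j | k) <;> simp <;> decide

lemma auto_conj {n : ℕ} {L M : Fin n → Fin n → Fin n} {g s : Perm (RCE n)} {τ : Perm (Fin 3)}
    (hpart : ∀ x, latinPart n (s x) = τ (latinPart n x))
    (hcells : latinCells n M = (fun t => ⇑s '' t) '' latinCells n L)
    (hA : IsLatinAuto n L g) : IsLatinAuto n M (s * g * s⁻¹) := by
  obtain ⟨σ, hσ⟩ := hA.1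
  have hpartinv : ∀ x, latinPart n (s⁻¹ x) = τ⁻¹ (latinPart n x) := by
    intro x
    have h := hpart (s⁻¹ x)
    rw [← Perm.mul_apply, mul_inv_cancel, Perm.one_apply] at h
    rw [h, ← Perm.mul_apply, inv_mul_cancel, Perm.one_apply]
  constructor
  · refine ⟨τ * σ * τ⁻¹, fun x => ?_⟩
    rw [Perm.mul_apply, Perm.mul_apply, hpart, hσ, hpartinv]
    rfl
  · have h1 : (fun t => ⇑s⁻¹ '' t) '' ((fun t => ⇑s '' t) '' latinCells n L) =
        latinCells n L := by
      rw [← F_mul]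
      simp
    rw [hcells, F_mul, h1, F_mul, hA.2]

lemma card_conj_RC (n : ℕ) (g : Perm (RCE n)) :
    (autoSet n g).card ≤ (autoSet n (sRC n * g * (sRC n)⁻¹)).card := by
  apply Finset.card_le_card_of_injOn (fun L => fun j i => L i j)
  · intro L hL
    rw [Finset.mem_coe, autoSet, Finset.mem_filter] at hL
    obtain ⟨-, hLat, hAuto⟩ := hL
    rw [Finset.mem_coe, autoSet, Finset.mem_filter]
    refine ⟨Finset.mem_univ _, ⟨fun j => hLat.2 j, fun i => hLat.1 i⟩, ?_⟩
    apply auto_conj part_sRC ?_ hAuto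
    ext s
    constructor
    · rintro ⟨x, y, rfl⟩
      refine ⟨{Sum.inl y, Sum.inr (Sum.inl x), Sum.inr (Sum.inr (L y x))},
        ⟨y, x, rfl⟩, ?_⟩
      show ⇑(sRC n) '' _ = _
      rw [Set.image_insert_eq, Set.image_insert_eq, Set.image_singleton,
        sRC_inl, sRC_inrl, sRC_inrr, triple_comm12]
    · rintro ⟨t, ⟨i, j, rfl⟩, rfl⟩
      refine ⟨j, i, ?_⟩
      show ⇑(sRC n) '' ({Sum.inl i, Sum.inr (Sum.inl j), Sum.inr (Sum.inr (L i j))} :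
        Set (RCE n)) = _
      rw [Set.image_insert_eq, Set.image_insert_eq, Set.image_singleton,
        sRC_inl, sRC_inrl, sRC_inrr, triple_comm12]
  · intro L hL L' hL' h
    funext i j
    exact congrFun (congrFun h j) i

lemma card_conj_CE (n : ℕ) (hn : 4 ≤ n) (g : Perm (RCE n)) :
    (autoSet n g).card ≤ (autoSet n (sCE n * g * (sCE n)⁻¹)).card := by
  haveI : Nonempty (Fin n) := ⟨⟨0, by omega⟩⟩
  apply Finset.card_le_card_of_injOn (fun L => fun i k => Function.invFun (L i) k)
  · intro L hL
    rw [Finset.mem_coe, autoSet, Finset.mem_filter] at hL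
    obtain ⟨-, hLat, hAuto⟩ := hL
    have hri : ∀ i k, L i (Function.invFun (L i) k) = k :=
      fun i k => Function.rightInverse_invFun (hLat.1 i).2 k
    have hli : ∀ i j, Function.invFun (L i) (L i j) = j :=
      fun i j => Function.leftInverse_invFun (hLat.1 i).1 j
    rw [Finset.mem_coe, autoSet, Finset.mem_filter]
    refine ⟨Finset.mem_univ _, ⟨?_, ?_⟩, ?_⟩
    · -- rows of M bijective
      intro i
      constructor
      · intro k k' hkk
        have hkk' : Function.invFun (L i) k = Function.invFun (L i) k' := hkk
        rw [← hri i k, ← hri i k', hkk']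
      · intro j
        exact ⟨L i j, hli i j⟩
    · -- columns of M bijective
      intro k
      constructor
      · intro i i' hii
        have hii' : Function.invFun (L i) k = Function.invFun (L i') k := hii
        have hc : L i (Function.invFun (L i') k) = L i' (Function.invFun (L i') k) := by
          conv_lhs => rw [← hii']
          rw [hri i k, hri i' k]
        exact (hLat.2 (Function.invFun (L i') k)).1 hc
      · intro j
        obtain ⟨r, hr⟩ := (hLat.2 j).2 k
        exact ⟨r, by rw [← hr]; exact hli r j⟩
    · apply auto_conj part_sCE ?_ hAuto
      ext s
      constructor
      · rintro ⟨x, y, rfl⟩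
        refine ⟨{Sum.inl x, Sum.inr (Sum.inl (Function.invFun (L x) y)),
          Sum.inr (Sum.inr (L x (Function.invFun (L x) y)))},
          ⟨x, Function.invFun (L x) y, rfl⟩, ?_⟩
        show ⇑(sCE n) '' _ = _
        rw [Set.image_insert_eq, Set.image_insert_eq, Set.image_singleton,
          sCE_inl, sCE_inrl, sCE_inrr, triple_comm23, hri]
      · rintro ⟨t, ⟨i, j, rfl⟩, rfl⟩
        refine ⟨i, L i j, ?_⟩
        show ⇑(sCE n) '' ({Sum.inl i, Sum.inr (Sum.inl j), Sum.inr (Sum.inr (L i j))} :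
          Set (RCE n)) = _
        rw [Set.image_insert_eq, Set.image_insert_eq, Set.image_singleton,
          sCE_inl, sCE_inrl, sCE_inrr, triple_comm23]
        simp only [hli]
  · intro L hL L' hL' h
    rw [Finset.mem_coe, autoSet, Finset.mem_filter] at hL hL'
    have h' : ∀ i k, Function.invFun (L i) k = Function.invFun (L' i) k :=
      fun i k => congrFun (congrFun h i) k
    funext i j
    have h2 : Function.invFun (L' i) (L i j) = j := by
      rw [← h' i (L i j)]
      exact Function.leftInverse_invFun (hL.2.1.1 i).1 j
    have h3 := congrArg (L' i) h2
    rw [Function.rightInverse_invFun (hL'.2.1.1 i).2 (L i j)] at h3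
    exact h3
-- ===== per-g orchestration =====

def c021 : Perm (Fin 3) := Equiv.swap 0 1 * Equiv.swap 0 2

lemma conj_spec (n : ℕ) (g s : Perm (RCE n)) (τ : Perm (Fin 3))
    (hs : ∀ x, latinPart n (s x) = τ (latinPart n x)) {σ : Perm (Fin 3)}
    (hσ : ∀ x, latinPart n (g x) = σ (latinPart n x)) :
    ∀ x, latinPart n ((s * g * s⁻¹) x) = (τ * σ * τ⁻¹) (latinPart n x) := by
  have hsinv : ∀ x, latinPart n (s⁻¹ x) = τ⁻¹ (latinPart n x) := by
    intro x
    have h := hs (s⁻¹ x)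
    rw [← Perm.mul_apply, mul_inv_cancel, Perm.one_apply] at h
    rw [h, ← Perm.mul_apply, inv_mul_cancel, Perm.one_apply]
  intro x
  rw [Perm.mul_apply, Perm.mul_apply, hs, hσ, hsinv]
  rfl

lemma conj_ne_one {n : ℕ} {g : Perm (RCE n)} (s : Perm (RCE n)) (h : g ≠ 1) :
    s * g * s⁻¹ ≠ 1 := by
  intro hc
  apply h
  have h2 : s⁻¹ * (s * g * s⁻¹) * s = s⁻¹ * 1 * s := by rw [hc]
  group at h2
  simpa using h2

lemma bound_sw01_full (n : ℕ) (hn : 4 ≤ n) (g : Perm (RCE n)) (hg1 : g ≠ 1)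
    (hσ : ∀ x, latinPart n (g x) = Equiv.swap 0 1 (latinPart n x)) :
    ∃ m : ℕ, (autoSet n g).card ≤ n ^ m ∧ 8 * m ≤ 5 * n ^ 2 := by
  by_cases h2 : g * g = 1
  · exact bound_swap01 n hn g h2 hσ
  · obtain ⟨m, hm1, hm2⟩ := bound_autotop n (g * g) h2 (fun x => by
      rw [Perm.mul_apply, hσ, hσ, Equiv.swap_apply_self])
    exact ⟨m, le_trans (Finset.card_le_card (autoSet_subset_sq n g)) hm1, hm2⟩

lemma bound_sw02_full (n : ℕ) (hn : 4 ≤ n) (g : Perm (RCE n)) (hg1 : g ≠ 1)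
    (hσ : ∀ x, latinPart n (g x) = Equiv.swap 0 2 (latinPart n x)) :
    ∃ m : ℕ, (autoSet n g).card ≤ n ^ m ∧ 8 * m ≤ 5 * n ^ 2 := by
  have hσ' := conj_spec n g (sCE n) (Equiv.swap 1 2) part_sCE hσ
  have hperm : Equiv.swap 1 2 * Equiv.swap 0 2 * (Equiv.swap 1 2)⁻¹ =
      (Equiv.swap 0 1 : Perm (Fin 3)) := by decide
  rw [hperm] at hσ'
  obtain ⟨m, h1, h2⟩ := bound_sw01_full n hn _ (conj_ne_one (sCE n) hg1) hσ'
  exact ⟨m, le_trans (card_conj_CE n hn g) h1, h2⟩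

lemma bound_sw12_full (n : ℕ) (hn : 4 ≤ n) (g : Perm (RCE n)) (hg1 : g ≠ 1)
    (hσ : ∀ x, latinPart n (g x) = Equiv.swap 1 2 (latinPart n x)) :
    ∃ m : ℕ, (autoSet n g).card ≤ n ^ m ∧ 8 * m ≤ 5 * n ^ 2 := by
  have hσ' := conj_spec n g (sRC n) (Equiv.swap 0 1) part_sRC hσ
  have hperm : Equiv.swap 0 1 * Equiv.swap 1 2 * (Equiv.swap 0 1)⁻¹ =
      (Equiv.swap 0 2 : Perm (Fin 3)) := by decide
  rw [hperm] at hσ'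
  obtain ⟨m, h1, h2⟩ := bound_sw02_full n hn _ (conj_ne_one (sRC n) hg1) hσ'
  exact ⟨m, le_trans (card_conj_RC n g) h1, h2⟩

lemma bound_c012_full (n : ℕ) (hn : 4 ≤ n) (g : Perm (RCE n))
    (hσ : ∀ x, latinPart n (g x) = c012 (latinPart n x)) :
    ∃ m : ℕ, (autoSet n g).card ≤ n ^ m ∧ 8 * m ≤ 5 * n ^ 2 := by
  by_cases h3 : g * (g * g) = 1
  · exact bound_c012 n hn g h3 hσ
  · have hcube : ∀ t : Fin 3, c012 (c012 (c012 t)) = t := by decide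
    obtain ⟨m, hm1, hm2⟩ := bound_autotop n (g * (g * g)) h3 (fun x => by
      rw [Perm.mul_apply, Perm.mul_apply, hσ, hσ, hσ, hcube])
    exact ⟨m, le_trans (Finset.card_le_card (autoSet_subset_cube n g)) hm1, hm2⟩

lemma bound_c021_full (n : ℕ) (hn : 4 ≤ n) (g : Perm (RCE n)) (hg1 : g ≠ 1)
    (hσ : ∀ x, latinPart n (g x) = c021 (latinPart n x)) :
    ∃ m : ℕ, (autoSet n g).card ≤ n ^ m ∧ 8 * m ≤ 5 * n ^ 2 := by
  have hσ' := conj_spec n g (sCE n) (Equiv.swap 1 2) part_sCE hσ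
  have hperm : Equiv.swap 1 2 * c021 * (Equiv.swap 1 2)⁻¹ = c012 := by decide
  rw [hperm] at hσ'
  obtain ⟨m, h1, h2⟩ := bound_c012_full n hn _ hσ'
  exact ⟨m, le_trans (card_conj_CE n hn g) h1, h2⟩

lemma per_g (n : ℕ) (hn : 4 ≤ n) (g : Perm (RCE n)) (hg1 : g ≠ 1)
    (hp : ∃ σ : Perm (Fin 3), ∀ x, latinPart n (g x) = σ (latinPart n x)) :
    ∃ m : ℕ, (autoSet n g).card ≤ n ^ m ∧ 8 * m ≤ 5 * n ^ 2 := by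
  obtain ⟨σ, hσ⟩ := hp
  have hall : ∀ σ : Perm (Fin 3), σ = 1 ∨ σ = Equiv.swap 0 1 ∨ σ = Equiv.swap 0 2 ∨
      σ = Equiv.swap 1 2 ∨ σ = c012 ∨ σ = c021 := by decide
  rcases hall σ with h | h | h | h | h | h <;> rw [h] at hσ
  · exact bound_autotop n g hg1 (fun x => by rw [hσ]; rfl)
  · exact bound_sw01_full n hn g hg1 hσ
  · exact bound_sw02_full n hn g hg1 hσ
  · exact bound_sw12_full n hn g hg1 hσ
  · exact bound_c012_full n hn g hσ
  · exact bound_c021_full n hn g hg1 hσ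
-- ===== counting paratopisms =====

lemma card_filter_bij (k : ℕ) [DecidablePred (fun f : Fin k → Fin k => Function.Bijective f)] :
    (Finset.univ.filter (fun f : Fin k → Fin k => Function.Bijective f)).card =
      k.factorial := by
  rw [← Fintype.card_subtype]
  have e : {f : Fin k → Fin k // Function.Bijective f} ≃ Equiv.Perm (Fin k) :=
    { toFun := fun f => Equiv.ofBijective f.1 f.2
      invFun := fun π => ⟨π, π.bijective⟩
      left_inv := fun f => Subtype.ext rfl
      right_inv := fun π => Equiv.ext fun x => rfl }
  rw [Fintype.card_congr e, Fintype.card_perm, Fintype.card_fin]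

lemma Pg_card (n : ℕ) (hn : 4 ≤ n) :
    (Finset.univ.filter (fun g : Perm (RCE n) => g ≠ 1 ∧
      ∃ σ : Perm (Fin 3), ∀ x, latinPart n (g x) = σ (latinPart n x))).card ≤
    6 * n.factorial ^ 3 := by
  have hz : (0 : ℕ) < n := by omega
  set z : Fin n := ⟨0, hz⟩ with hzdef
  set Φ : Perm (RCE n) → (Fin 3 → Fin 3) × (Fin n → Fin n) × (Fin n → Fin n) × (Fin n → Fin n) :=
    fun g => (fun t => latinPart n (g (pinj n t z)),
      fun i => rceIdx (g (Sum.inl i)),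
      fun j => rceIdx (g (Sum.inr (Sum.inl j))),
      fun k => rceIdx (g (Sum.inr (Sum.inr k)))) with hΦ
  set T := ((Finset.univ.filter (fun q : Fin 3 → Fin 3 => Function.Bijective q)) ×ˢ
    ((Finset.univ.filter (fun q : Fin n → Fin n => Function.Bijective q)) ×ˢ
      ((Finset.univ.filter (fun q : Fin n → Fin n => Function.Bijective q)) ×ˢ
        (Finset.univ.filter (fun q : Fin n → Fin n => Function.Bijective q))))) with hT
  have hle : (Finset.univ.filter (fun g : Perm (RCE n) => g ≠ 1 ∧
      ∃ σ : Perm (Fin 3), ∀ x, latinPart n (g x) = σ (latinPart n x))).card ≤ T.card := by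
    apply Finset.card_le_card_of_injOn Φ
    · intro g hg
      rw [Finset.mem_coe, Finset.mem_filter] at hg
      obtain ⟨-, -, σ, hσ⟩ := hg
      have hcomp : ∀ (s t : Fin 3), σ s = t →
          Function.Bijective (fun i : Fin n => rceIdx (g (pinj n s i))) := by
        intro s t hst
        obtain ⟨e, heb, he⟩ := extract_component hσ s t hst
        have : (fun i : Fin n => rceIdx (g (pinj n s i))) = e := by
          funext i
          rw [he]
          fin_cases t <;> rfl
        rw [this]
        exact heb
      rw [Finset.mem_coe, hT, Finset.mem_product]
      constructor
      · rw [Finset.mem_filter]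
        refine ⟨Finset.mem_univ _, ?_⟩
        have : (fun t => latinPart n (g (pinj n t z))) = ⇑σ := by
          funext t
          rw [hσ, part_pinj]
        rw [hΦ]
        simp only
        rw [this]
        exact σ.bijective
      rw [Finset.mem_product]
      constructor
      · rw [Finset.mem_filter]
        exact ⟨Finset.mem_univ _, hcomp 0 (σ 0) rfl⟩
      rw [Finset.mem_product]
      constructor
      · rw [Finset.mem_filter]
        exact ⟨Finset.mem_univ _, hcomp 1 (σ 1) rfl⟩
      · rw [Finset.mem_filter]
        exact ⟨Finset.mem_univ _, hcomp 2 (σ 2) rfl⟩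
    · intro g hg g' hg' h
      rw [Finset.mem_coe, Finset.mem_filter] at hg hg'
      obtain ⟨-, -, σ, hσ⟩ := hg
      obtain ⟨-, -, σ', hσ'⟩ := hg'
      have h1 : ∀ t, latinPart n (g (pinj n t z)) = latinPart n (g' (pinj n t z)) :=
        fun t => congrFun (congrArg Prod.fst h) t
      have hσσ' : ∀ t : Fin 3, σ t = σ' t := by
        intro t
        have hh := h1 t
        rw [hσ, hσ', part_pinj] at hh
        exact hh
      have h2 : ∀ i, rceIdx (g (Sum.inl i)) = rceIdx (g' (Sum.inl i)) :=
        fun i => congrFun (congrArg (fun q => q.2.1) h) i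
      have h3 : ∀ j, rceIdx (g (Sum.inr (Sum.inl j))) = rceIdx (g' (Sum.inr (Sum.inl j))) :=
        fun j => congrFun (congrArg (fun q => q.2.2.1) h) j
      have h4 : ∀ k, rceIdx (g (Sum.inr (Sum.inr k))) = rceIdx (g' (Sum.inr (Sum.inr k))) :=
        fun k => congrFun (congrArg (fun q => q.2.2.2) h) k
      apply Equiv.ext
      rintro (i | j | k)
      · exact rce_eq_of (by rw [hσ, hσ', part_inl, hσσ']) (h2 i)
      · exact rce_eq_of (by rw [hσ, hσ', part_inrl, hσσ']) (h3 j)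
      · exact rce_eq_of (by rw [hσ, hσ', part_inrr, hσσ']) (h4 k)
  refine le_trans hle (le_of_eq ?_)
  rw [hT, Finset.card_product, Finset.card_product, Finset.card_product,
    card_filter_bij, card_filter_bij]
  have h6 : Nat.factorial 3 = 6 := rfl
  rw [h6]
  ring

-- ===== the main theorem =====

/-- For `n ≥ 4`, the number of Latin squares of order `n` admitting at least
one non-identity automorphism is at most `6 (n!)³ n ^ (5n²/8)`. -/
theorem count_latin_squares_with_nontrivial_auto (n : ℕ) (hn : 4 ≤ n) :
    (Nat.card {L : Fin n → Fin n → Fin n // IsLatinSquare n L ∧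
        ∃ g : Equiv.Perm (Fin n ⊕ Fin n ⊕ Fin n), g ≠ 1 ∧ IsLatinAuto n L g} : ℝ) ≤
      6 * (n.factorial : ℝ) ^ 3 * (n : ℝ) ^ (5 * (n : ℝ) ^ 2 / 8) := by
  classical
  set bigP : (Fin n → Fin n → Fin n) → Prop := fun L => IsLatinSquare n L ∧
    ∃ g : Equiv.Perm (Fin n ⊕ Fin n ⊕ Fin n), g ≠ 1 ∧ IsLatinAuto n L g with hbigP
  set Pg : Finset (Perm (RCE n)) := Finset.univ.filter (fun g : Perm (RCE n) => g ≠ 1 ∧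
    ∃ σ : Perm (Fin 3), ∀ x, latinPart n (g x) = σ (latinPart n x)) with hPg
  haveI : Fintype {L : Fin n → Fin n → Fin n // bigP L} := Fintype.ofFinite _
  have hcard : (Nat.card {L : Fin n → Fin n → Fin n // bigP L}) =
      (Finset.univ.filter bigP).card := by
    rw [Nat.card_eq_fintype_card]
    exact Fintype.card_of_subtype (Finset.univ.filter bigP) (fun x => by
      rw [Finset.mem_filter]
      simp)
  have hsub : (Finset.univ.filter bigP) ⊆ Pg.biUnion (fun g => autoSet n g) := by
    intro L hL
    rw [Finset.mem_filter] at hL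
    obtain ⟨-, hLat, g, hg1, hAuto⟩ := hL
    rw [Finset.mem_biUnion]
    refine ⟨g, ?_, ?_⟩
    · rw [hPg, Finset.mem_filter]
      exact ⟨Finset.mem_univ _, hg1, hAuto.1⟩
    · rw [autoSet, Finset.mem_filter]
      exact ⟨Finset.mem_univ _, hLat, hAuto⟩
  have h1 : (Finset.univ.filter bigP).card ≤ ∑ g ∈ Pg, (autoSet n g).card :=
    le_trans (Finset.card_le_card hsub) (Finset.card_biUnion_le)
  set B : ℝ := (n : ℝ) ^ (5 * (n : ℝ) ^ 2 / 8) with hB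
  have hBnn : 0 ≤ B := Real.rpow_nonneg (by positivity) _
  have hper : ∀ g ∈ Pg, ((autoSet n g).card : ℝ) ≤ B := by
    intro g hg
    rw [hPg, Finset.mem_filter] at hg
    obtain ⟨m, hm1, hm2⟩ := per_g n hn g hg.2.1 hg.2.2
    have hc1 : ((autoSet n g).card : ℝ) ≤ ((n : ℝ)) ^ (m : ℕ) := by
      have := (Nat.cast_le (α := ℝ)).2 hm1
      rwa [Nat.cast_pow] at this
    refine le_trans hc1 ?_
    rw [← Real.rpow_natCast (n : ℝ) m, hB]
    apply Real.rpow_le_rpow_of_exponent_le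
    · have : (4 : ℝ) ≤ (n : ℝ) := by exact_mod_cast hn
      linarith
    · have h8 : (8 : ℝ) * (m : ℝ) ≤ 5 * ((n : ℝ)) ^ 2 := by exact_mod_cast hm2
      linarith
  have h2 : ((Finset.univ.filter bigP).card : ℝ) ≤ (Pg.card : ℝ) * B := by
    calc ((Finset.univ.filter bigP).card : ℝ)
        ≤ ((∑ g ∈ Pg, (autoSet n g).card : ℕ) : ℝ) := by exact_mod_cast h1
      _ = ∑ g ∈ Pg, ((autoSet n g).card : ℝ) := by push_cast; rfl
      _ ≤ ∑ _g ∈ Pg, B := Finset.sum_le_sum hper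
      _ = (Pg.card : ℝ) * B := by rw [Finset.sum_const, nsmul_eq_mul]
  have h3 : (Pg.card : ℝ) ≤ 6 * (n.factorial : ℝ) ^ 3 := by
    have := (Nat.cast_le (α := ℝ)).2 (Pg_card n hn)
    rw [hPg]
    refine le_trans this ?_
    push_cast
    ring_nf
    exact le_rfl
  rw [hcard]
  refine le_trans h2 ?_
  exact mul_le_mul_of_nonneg_right h3 hBnn
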